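/- Let r₀, ..., r_{T-1} be real numbers and define the prefix sums S_k = ∑_{i=0}^{k} r_i for k ≥ 0 and S_{-1} = 0. Define h_t via h₀ = 0, h_{t+1} = max(0, h_t − r_t). Then max(0, r_t − h_t) = max_{k ≤ t} S_k − max_{k ≤ t−1} S_k where the maxima include k = −1, i.e., the adapted reward for the maximum-prefix-sum objective equals the increment of the running maximum of prefix sums. -/

import Mathlib

private lemma sup_range_succ (r : ℕ → ℝ) (t : ℕ) :
    (Finset.range (t + 2)).sup' (Finset.nonempty_range_iff.mpr (Nat.succ_ne_zero _))
        (fun n => ∑ i ∈ Finset.range n, r i)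
      = max ((Finset.range (t + 1)).sup' (Finset.nonempty_range_iff.mpr (Nat.succ_ne_zero _))
          (fun n => ∑ i ∈ Finset.range n, r i)) (∑ i ∈ Finset.range (t + 1), r i) := by
  have h1 : (Finset.range (t + 2)) = insert (t+1) (Finset.range (t + 1)) := by
    rw [Finset.range_add_one]
  rw [Finset.sup'_congr _ h1 (fun _ _ => rfl),
    Finset.sup'_insert (Finset.nonempty_range_iff.mpr (Nat.succ_ne_zero _))]
  simp [max_comm]

private lemma h_inv (r h : ℕ → ℝ) (h0 : h 0 = 0)
    (hrec : ∀ t, h (t + 1) = max 0 (h t - r t)) :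
    ∀ t, h t = (Finset.range (t + 1)).sup' (Finset.nonempty_range_iff.mpr (Nat.succ_ne_zero _))
        (fun n => ∑ i ∈ Finset.range n, r i) - ∑ i ∈ Finset.range t, r i := by
  intro t
  induction t with
  | zero => simpa using h0
  | succ t ih =>
      rw [hrec t, ih, sup_range_succ, Finset.sum_range_succ]
      set M := (Finset.range (t + 1)).sup' (Finset.nonempty_range_iff.mpr (Nat.succ_ne_zero _))
        (fun n => ∑ i ∈ Finset.range n, r i)
      set S := ∑ i ∈ Finset.range t, r i
      rcases le_total M (S + r t) with hle | hle
      · rw [max_eq_right hle, max_eq_left (by linarith)]; ring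
      · rw [max_eq_left hle, max_eq_right (by linarith)]; ring

/-- Stepwise version of the maximum-prefix-sum identity: with `h₀ = 0`,
`h_{t+1} = max 0 (h_t − r_t)`, the adapted reward `max 0 (r_t − h_t)` equals
the increment of the running maximum of prefix sums (maxima including the
empty prefix `S₋₁ = 0`; a prefix of length `n` corresponds to `k = n − 1`). -/
theorem adapted_reward_eq_running_max_increment (r h : ℕ → ℝ) (h0 : h 0 = 0)
    (hrec : ∀ t, h (t + 1) = max 0 (h t - r t)) :
    ∀ t, max 0 (r t - h t) =
      (Finset.range (t + 2)).sup' (Finset.nonempty_range_iff.mpr (by omega))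
        (fun n => ∑ i ∈ Finset.range n, r i)
      - (Finset.range (t + 1)).sup' (Finset.nonempty_range_iff.mpr (by omega))
          (fun n => ∑ i ∈ Finset.range n, r i) := by
  intro t
  rw [h_inv r h h0 hrec t, sup_range_succ, Finset.sum_range_succ]
  set M := (Finset.range (t + 1)).sup' (Finset.nonempty_range_iff.mpr (by omega))
    (fun n => ∑ i ∈ Finset.range n, r i)
  set S := ∑ i ∈ Finset.range t, r i
  rcases le_total M (S + r t) with hle | hle
  · rw [max_eq_right hle, max_eq_right (by linarith)]; ring
  · rw [max_eq_left hle, max_eq_left (by linarith)]; ring
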